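/- A countable intersection of α-winning sets for Schmidt's game on ℝ^d is α-winning. -/

import Mathlib

/-- The history of Bob's first i+1 moves (balls given by center and radius). -/
def hist {E : Type*} (x : ℕ → E) (r : ℕ → ℝ) (i : ℕ) : List (E × ℝ) :=
  List.ofFn fun j : Fin (i + 1) => (x j, r j)

/-- `S` is α-winning for Schmidt's game on ℝ^d: for every β ∈ (0,1) Alice has a
strategy `f` (choosing the center of her ball as a function of the history of
Bob's balls; her radius is α·rᵢ) such that for every legal play by Bob
(r₀ > 0, rᵢ₊₁ = βαrᵢ, dist(xᵢ₊₁, xᵢ') ≤ (1−β)αrᵢ), Alice's moves are legal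
(dist(xᵢ', xᵢ) ≤ (1−α)rᵢ) and every point of ⋂ᵢ Bᵢ lies in S. -/
def AlphaWinning {d : ℕ} (S : Set (EuclideanSpace ℝ (Fin d))) (α : ℝ) : Prop :=
  ∀ β ∈ Set.Ioo (0 : ℝ) 1,
    ∃ f : List (EuclideanSpace ℝ (Fin d) × ℝ) → EuclideanSpace ℝ (Fin d),
      ∀ (x : ℕ → EuclideanSpace ℝ (Fin d)) (r : ℕ → ℝ),
        0 < r 0 →
        (∀ i, r (i + 1) = β * (α * r i)) →
        (∀ i, dist (x (i + 1)) (f (hist x r i)) ≤ (1 - β) * (α * r i)) →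
        (∀ i, dist (f (hist x r i)) (x i) ≤ (1 - α) * r i) ∧
        ∀ z, (∀ i, dist z (x i) ≤ r i) → z ∈ S

namespace Stmt10Aux


/-- the global turn (0-based) at which strategy `n` makes its `k`-th move -/
def turn (n k : ℕ) : ℕ := 2 ^ n * (2 * k + 1) - 1

def kOf (m : ℕ) : ℕ := (m / 2 ^ padicValNat 2 m - 1) / 2

lemma turn_pos_aux (n k : ℕ) : 0 < 2 ^ n * (2 * k + 1) :=
  Nat.mul_pos (pow_pos (by norm_num : (0:ℕ) < 2) n) (by omega)

lemma turn_add_one (n k : ℕ) : turn n k + 1 = 2 ^ n * (2 * k + 1) := by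
  have := turn_pos_aux n k; unfold turn; omega

lemma nOf_turn (n k : ℕ) : padicValNat 2 (turn n k + 1) = n := by
  rw [turn_add_one, padicValNat.mul (by positivity) (by omega),
    padicValNat.prime_pow, padicValNat.eq_zero_of_not_dvd (by omega), add_zero]

lemma kOf_turn (n k : ℕ) : kOf (turn n k + 1) = k := by
  rw [kOf, nOf_turn, turn_add_one,
    Nat.mul_div_cancel_left _ (pow_pos (by norm_num : (0:ℕ) < 2) n)]
  omega

lemma turn_eq (i : ℕ) : turn (padicValNat 2 (i + 1)) (kOf (i + 1)) = i := by
  set m := i + 1 with hm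
  set n := padicValNat 2 m with hn
  have hdvd : 2 ^ n ∣ m := pow_padicValNat_dvd
  have hodd : ¬ 2 ∣ m / 2 ^ n := by
    intro h2
    have : 2 ^ (n + 1) ∣ m := by
      obtain ⟨c, hc⟩ := h2
      obtain ⟨e, he⟩ := hdvd
      have h2n : 0 < 2 ^ n := pow_pos (by norm_num : (0:ℕ) < 2) n
      have : e = 2 * c := by
        have : m / 2 ^ n = e := by rw [he, Nat.mul_div_cancel_left _ h2n]
        omega
      exact ⟨c, by rw [he, this]; ring⟩
    exact pow_succ_padicValNat_not_dvd (by omega) this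
  obtain ⟨e, he⟩ := hdvd
  have h2n : 0 < 2 ^ n := pow_pos (by norm_num : (0:ℕ) < 2) n
  have hq : m / 2 ^ n = e := by rw [he, Nat.mul_div_cancel_left _ h2n]
  have he_odd : ¬ 2 ∣ e := by rwa [hq] at hodd
  have hkOf : kOf m = e / 2 := by rw [kOf, ← hn, hq]; omega
  rw [hkOf, turn]
  have : 2 * (e / 2) + 1 = e := by omega
  rw [this, ← he]; omega

lemma turn_succ (n k : ℕ) : turn n (k + 1) = turn n k + 2 ^ (n + 1) := by
  have h1 := turn_add_one n k
  have h2 := turn_add_one n (k + 1)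
  have : 2 ^ n * (2 * (k + 1) + 1) = 2 ^ n * (2 * k + 1) + 2 ^ (n + 1) := by ring
  omega

lemma turn_lt_succ (n k : ℕ) : turn n k < turn n (k + 1) := by
  rw [turn_succ]; have : 0 < 2 ^ (n+1) := pow_pos (by norm_num : (0:ℕ) < 2) _; omega

lemma turn_le (n : ℕ) {j k : ℕ} (h : j ≤ k) : turn n j ≤ turn n k := by
  induction k with
  | zero =>
    have : j = 0 := by omega
    subst this; rfl
  | succ k ih =>
    rcases Nat.lt_or_ge j (k+1) with h' | h'
    · exact le_trans (ih (by omega)) (le_of_lt (turn_lt_succ n k))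
    · have : j = k + 1 := by omega
      subst this; rfl

/-- extend a partial play (defined up to index `k`) by letting Bob copy
Alice's strategy `g` forever after. -/
def extend {E : Type*} (k : ℕ) (X : ℕ → E) (R : ℕ → ℝ) (g : List (E × ℝ) → E) :
    ℕ → E
  | j =>
    if j ≤ k then X j
    else g (List.ofFn fun t : Fin j => (extend k X R g t.1, R t.1))
termination_by j => j
decreasing_by exact t.isLt

lemma extend_le {E : Type*} (k : ℕ) (X : ℕ → E) (R : ℕ → ℝ)
    (g : List (E × ℝ) → E) {j : ℕ} (hj : j ≤ k) : extend k X R g j = X j := by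
  rw [extend, if_pos hj]

lemma extend_gt {E : Type*} (k : ℕ) (X : ℕ → E) (R : ℕ → ℝ)
    (g : List (E × ℝ) → E) {j : ℕ} (hj : k < j + 1) :
    extend k X R g (j + 1) = g (hist (extend k X R g) R j) := by
  rw [extend, if_neg (by omega)]; rfl

lemma hist_extend {E : Type*} (k : ℕ) (X : ℕ → E) (R : ℕ → ℝ)
    (g : List (E × ℝ) → E) {j : ℕ} (hj : j ≤ k) :
    hist (extend k X R g) R j = hist X R j := by
  unfold hist
  exact congrArg _ (funext fun t => by rw [extend_le k X R g (by omega)])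


end Stmt10Aux

section Test
open Stmt10Aux

/-- interleaved master strategy -/
noncomputable def master {E : Type*} [Inhabited E] (F : ℕ → List (E × ℝ) → E) :
    List (E × ℝ) → E := fun l =>
  F (padicValNat 2 l.length)
    ((List.range (kOf l.length + 1)).map fun j =>
      l.getD (turn (padicValNat 2 l.length) j) default)

theorem master_hist {E : Type*} [Inhabited E] (F : ℕ → List (E × ℝ) → E)
    (x : ℕ → E) (r : ℕ → ℝ) (n k : ℕ) :
    master F (hist x r (turn n k)) =
      F n (hist (fun j => x (turn n j)) (fun j => r (turn n j)) k) := by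
  unfold master
  have hlen : (hist x r (turn n k)).length = turn n k + 1 := by simp [hist]
  rw [hlen, nOf_turn, kOf_turn]
  congr 1
  apply List.ext_getElem
  · simp [hist]
  · intro t ht1 ht2
    have htk : t ≤ k := by simp only [List.length_map, List.length_range] at ht1; omega
    have htlt : turn n t < turn n k + 1 :=
      Nat.lt_succ_of_le (turn_le n htk)
    simp only [List.getElem_map, List.getElem_range]
    rw [List.getD_eq_getElem _ _ (by rw [hlen]; exact htlt)]
    simp only [hist, List.getElem_ofFn]


theorem chain {E : Type*} [PseudoMetricSpace E] {α β : ℝ}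
    (f : List (E × ℝ) → E) (x : ℕ → E) (r : ℕ → ℝ)
    (hrec : ∀ i, r (i + 1) = β * (α * r i))
    (hbob : ∀ i, dist (x (i + 1)) (f (hist x r i)) ≤ (1 - β) * (α * r i))
    (a s : ℕ)
    (halice : ∀ j, a < j → j ≤ a + s → dist (f (hist x r j)) (x j) ≤ (1 - α) * r j) :
    dist (x (a + s + 1)) (f (hist x r a)) ≤ α * r a - r (a + s + 1) := by
  induction s with
  | zero =>
    have h1 := hbob a
    have h2 := hrec a
    simp only [Nat.add_zero] at *
    linarith
  | succ s ih =>
    have h1 := hbob (a + s + 1)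
    have h2 := halice (a + s + 1) (by omega) (by omega)
    have h3 := ih (fun j hj1 hj2 => halice j hj1 (by omega))
    have h4 := hrec (a + s + 1)
    have htri := dist_triangle4 (x (a + s + 1 + 1)) (f (hist x r (a + s + 1)))
      (x (a + s + 1)) (f (hist x r a))
    show dist (x (a + s + 1 + 1)) (f (hist x r a)) ≤ α * r a - r (a + s + 1 + 1)
    linarith

theorem rpos {α β : ℝ} (hα : 0 < α) (hβ : 0 < β) (r : ℕ → ℝ) (h0 : 0 < r 0)
    (hrec : ∀ i, r (i + 1) = β * (α * r i)) : ∀ i, 0 < r i := by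
  intro i
  induction i with
  | zero => exact h0
  | succ i ih => rw [hrec]; positivity

theorem r_add {α β : ℝ} (r : ℕ → ℝ) (hrec : ∀ i, r (i + 1) = β * (α * r i))
    (a s : ℕ) : r (a + s) = (β * α) ^ s * r a := by
  induction s with
  | zero => simp
  | succ s ih =>
    show r (a + s + 1) = (β * α) ^ (s + 1) * r a
    rw [hrec (a + s), ih]; ring

/-- a countable intersection of α-winning sets for Schmidt's game
on ℝ^d is α-winning. -/
theorem stmt10 {d : ℕ} (α : ℝ) (hα : α ∈ Set.Ioo (0 : ℝ) 1)
    (S : ℕ → Set (EuclideanSpace ℝ (Fin d))) (h : ∀ n, AlphaWinning (S n) α) :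
    AlphaWinning (⋂ n, S n) α := by
  obtain ⟨hα0, hα1⟩ := hα
  intro β hβ
  obtain ⟨hβ0, hβ1⟩ := hβ
  have hγmem : ∀ n : ℕ, (α * β) ^ 2 ^ (n + 1) / α ∈ Set.Ioo (0 : ℝ) 1 := by
    intro n
    constructor
    · positivity
    · rw [div_lt_one hα0]
      have h2 : (α * β) ^ 2 ^ (n + 1) ≤ (α * β) ^ 2 :=
        Bound.pow_le_pow_right_of_le_one_or_one_le (Or.inr ⟨by positivity, by nlinarith,
          by calc (2:ℕ) = 2 ^ 1 := rfl
              _ ≤ 2 ^ (n + 1) := Nat.pow_le_pow_right (by norm_num) (by omega)⟩)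
      have hb2 : β * β < 1 := by nlinarith
      have hab : α * (β * β) < 1 := by nlinarith
      have h5 : α * (α * (β * β)) < α := mul_lt_of_lt_one_right hα0 hab
      nlinarith [h2, h5]
  choose F hF using fun n => h n _ (hγmem n)
  refine ⟨master F, ?_⟩
  intro x r hr0 hrec hbob
  have hrp : ∀ i, 0 < r i := rpos hα0 hβ0 r hr0 hrec
  have hγα : ∀ n : ℕ, ((α * β) ^ 2 ^ (n + 1) / α) * α = (β * α) ^ 2 ^ (n + 1) := by
    intro n
    rw [div_mul_cancel₀ _ (ne_of_gt hα0), mul_comm α β]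
  have hRrec : ∀ n j, r (turn n (j + 1)) =
      ((α * β) ^ 2 ^ (n + 1) / α) * (α * r (turn n j)) := by
    intro n j
    rw [turn_succ, r_add r hrec (turn n j) (2 ^ (n + 1))]
    rw [← hγα n]; ring
  have hstep : ∀ n j : ℕ, turn n j + (2 ^ (n + 1) - 1) + 1 = turn n (j + 1) := by
    intro n j
    have h1 := turn_succ n j
    have h2 : 0 < 2 ^ (n + 1) := pow_pos (by norm_num : (0:ℕ) < 2) _
    omega
  -- Alice's moves are legal
  have main : ∀ i, dist (master F (hist x r i) ) (x i) ≤ (1 - α) * r i := by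
    intro i
    induction i using Nat.strong_induction_on with
    | _ i IH =>
    obtain ⟨n, k, hik⟩ : ∃ n k, turn n k = i := ⟨_, _, turn_eq i⟩
    set X' := extend k (fun t => x (turn n t)) (fun t => r (turn n t)) (F n) with hX'
    have hbob' : ∀ j, dist (X' (j + 1)) (F n (hist X' (fun t => r (turn n t)) j)) ≤
        (1 - (α * β) ^ 2 ^ (n + 1) / α) * (α * r (turn n j)) := by
      intro j
      rcases Nat.lt_or_ge j k with hj | hj
      · rw [hX', extend_le k _ _ (F n) (show j + 1 ≤ k by omega),
          hist_extend k _ _ (F n) (le_of_lt hj), ← master_hist F x r n j]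
        show dist (x (turn n (j + 1))) (master F (hist x r (turn n j))) ≤ _
        have halice : ∀ t, turn n j < t → t ≤ turn n j + (2 ^ (n + 1) - 1) →
            dist (master F (hist x r t)) (x t) ≤ (1 - α) * r t := by
          intro t ht1 ht2
          apply IH
          have h2 : turn n (j + 1) ≤ turn n k := turn_le n (by omega)
          have h3 := hstep n j
          omega
        have hc := chain (master F) x r hrec hbob (turn n j) (2 ^ (n + 1) - 1) halice
        rw [hstep n j] at hc
        have h4 := hRrec n j
        linarith
      · rw [hX', extend_gt k _ _ (F n) (by omega), dist_self]
        have h1 : 0 < r (turn n j) := hrp _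
        have h2 := (hγmem n).2
        exact mul_nonneg (by linarith) (le_of_lt (mul_pos hα0 h1))
    have hall := hF n X' (fun t => r (turn n t)) (hrp _) (fun j => hRrec n j) hbob'
    have hleg := hall.1 k
    rw [hX', hist_extend k _ _ (F n) (le_refl k), extend_le k _ _ (F n) (le_refl k)] at hleg
    rw [← hik, master_hist F x r n k]
    exact hleg
  refine ⟨main, ?_⟩
  intro z hz
  refine Set.mem_iInter.2 fun n => ?_
  have hbobn : ∀ j, dist (x (turn n (j + 1)))
      (F n (hist (fun t => x (turn n t)) (fun t => r (turn n t)) j)) ≤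
      (1 - (α * β) ^ 2 ^ (n + 1) / α) * (α * r (turn n j)) := by
    intro j
    rw [← master_hist F x r n j]
    have hc := chain (master F) x r hrec hbob (turn n j) (2 ^ (n + 1) - 1)
      (fun t _ _ => main t)
    rw [hstep n j] at hc
    have h4 := hRrec n j
    linarith
  exact (hF n (fun t => x (turn n t)) (fun t => r (turn n t)) (hrp _)
    (fun j => hRrec n j) hbobn).2 z (fun j => hz (turn n j))


end Test
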